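/- Let W be a capacity-ranked generalized Wilson loop diagram (rk(M(W)) equals the total capacity c(P)) and F a cyclic flat of M(W). Then the sum over propagators of the restricted capacities c_F(p) = min(c(p), |End(F) ∩ E(p)|) equals rk_{M(W)}(F). -/

import Mathlib

open Finset

variable {n : ℕ} [NeZero n] {E P : Type*} [Fintype E] [DecidableEq E]
  [Fintype P] [DecidableEq P]

/-- The set of ends of a generalized Wilson loop diagram supported on the
vertex set `U ⊆ [n]`. -/
def Ends (supp : E → Finset (Fin n)) (U : Finset (Fin n)) : Finset E :=
  Finset.univ.filter fun e => (supp e ∩ U).Nonempty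

/-- The capacity (rank in the ends matroid `⊕_p U(c(p), |E(p)|)`) of a set of
ends `S`. -/
def capRank (prop : E → P) (c : P → ℕ) (S : Finset E) : ℕ :=
  ∑ p : P, min (S.filter fun e => prop e = p).card (c p)

/-- Rado independence for the generalized Wilson loop diagram: `V ⊆ [n]` is
independent in `M(W)` iff `|U| ≤ c(End(U))` for every `U ⊆ V`. -/
def IndepW (prop : E → P) (c : P → ℕ) (supp : E → Finset (Fin n))
    (V : Finset (Fin n)) : Prop :=
  ∀ U ∈ V.powerset, U.card ≤ capRank prop c (Ends supp U)

instance (prop : E → P) (c : P → ℕ) (supp : E → Finset (Fin n)) :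
    DecidablePred (IndepW prop c supp) := fun V =>
  inferInstanceAs (Decidable (∀ U ∈ V.powerset, U.card ≤ capRank prop c (Ends supp U)))

/-- The rank function of `M(W)`: the size of a largest independent subset. -/
def rkW (prop : E → P) (c : P → ℕ) (supp : E → Finset (Fin n))
    (V : Finset (Fin n)) : ℕ :=
  (V.powerset.filter fun T => IndepW prop c supp T).sup Finset.card

/-- A flat of `M(W)`. -/
def FlatW (prop : E → P) (c : P → ℕ) (supp : E → Finset (Fin n))
    (F : Finset (Fin n)) : Prop :=
  ∀ v ∉ F, rkW prop c supp (insert v F) ≠ rkW prop c supp F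

/-- A circuit of `M(W)`: a minimal dependent set. -/
def CircuitW (prop : E → P) (c : P → ℕ) (supp : E → Finset (Fin n))
    (C : Finset (Fin n)) : Prop :=
  ¬ IndepW prop c supp C ∧ ∀ v ∈ C, IndepW prop c supp (C.erase v)

/-- A cyclic flat of `M(W)`: a flat that is a union of circuits. -/
def CyclicFlatW (prop : E → P) (c : P → ℕ) (supp : E → Finset (Fin n))
    (F : Finset (Fin n)) : Prop :=
  FlatW prop c supp F ∧ ∀ v ∈ F, ∃ C ⊆ F, CircuitW prop c supp C ∧ v ∈ C

/-- Connectivity of the restriction `M(W)|F`: no partition of `F` into two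
nonempty parts on which the rank is additive. -/
def ConnectedOnW (prop : E → P) (c : P → ℕ) (supp : E → Finset (Fin n))
    (F : Finset (Fin n)) : Prop :=
  ∀ F₁ ⊆ F, F₁.Nonempty → (F \ F₁).Nonempty →
    rkW prop c supp F₁ + rkW prop c supp (F \ F₁) ≠ rkW prop c supp F


section Aux

set_option linter.unusedSectionVars false
set_option linter.unusedVariables false

variable (prop : E → P) (c : P → ℕ) (supp : E → Finset (Fin n))

lemma capRank_mono {S T : Finset E} (h : S ⊆ T) :
    capRank prop c S ≤ capRank prop c T :=
  Finset.sum_le_sum fun p _ =>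
    min_le_min (Finset.card_le_card (Finset.filter_subset_filter _ h)) le_rfl

lemma capRank_submod (S T : Finset E) :
    capRank prop c (S ∪ T) + capRank prop c (S ∩ T)
      ≤ capRank prop c S + capRank prop c T := by
  unfold capRank
  rw [← Finset.sum_add_distrib, ← Finset.sum_add_distrib]
  refine Finset.sum_le_sum fun p _ => ?_
  have h1 : ((S ∪ T).filter fun e => prop e = p) =
      (S.filter fun e => prop e = p) ∪ (T.filter fun e => prop e = p) :=
    Finset.filter_union _ _ _
  have h2 : ((S ∩ T).filter fun e => prop e = p) =
      (S.filter fun e => prop e = p) ∩ (T.filter fun e => prop e = p) :=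
    Finset.filter_inter_distrib _ _ _
  rw [h1, h2]
  have h3 := Finset.card_union_add_card_inter (S.filter fun e => prop e = p)
    (T.filter fun e => prop e = p)
  have h4 : (S.filter fun e => prop e = p).card ≤
      ((S.filter fun e => prop e = p) ∪ (T.filter fun e => prop e = p)).card :=
    Finset.card_le_card Finset.subset_union_left
  have h5 : (T.filter fun e => prop e = p).card ≤
      ((S.filter fun e => prop e = p) ∪ (T.filter fun e => prop e = p)).card :=
    Finset.card_le_card Finset.subset_union_right
  omega

lemma Ends_mono {U V : Finset (Fin n)} (h : U ⊆ V) : Ends supp U ⊆ Ends supp V := by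
  intro e he
  simp only [Ends, mem_filter, mem_univ, true_and] at he ⊢
  exact he.mono (Finset.inter_subset_inter (Finset.Subset.refl _) h)

lemma Ends_union (U V : Finset (Fin n)) :
    Ends supp (U ∪ V) = Ends supp U ∪ Ends supp V := by
  ext e
  simp only [Ends, mem_filter, mem_univ, true_and, mem_union,
    Finset.inter_union_distrib_left, Finset.Nonempty, Finset.mem_union, exists_or]
  simp [Finset.mem_filter]

lemma Ends_inter_subset (U V : Finset (Fin n)) :
    Ends supp (U ∩ V) ⊆ Ends supp U ∩ Ends supp V :=
  Finset.subset_inter (Ends_mono supp Finset.inter_subset_left)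
    (Ends_mono supp Finset.inter_subset_right)

lemma fW_submod (U V : Finset (Fin n)) :
    capRank prop c (Ends supp (U ∪ V)) + capRank prop c (Ends supp (U ∩ V))
      ≤ capRank prop c (Ends supp U) + capRank prop c (Ends supp V) := by
  have h1 := capRank_submod prop c (Ends supp U) (Ends supp V)
  have h2 := capRank_mono prop c (Ends_inter_subset supp U V)
  rw [Ends_union]
  omega

lemma IndepW_empty : IndepW prop c supp (∅ : Finset (Fin n)) := by
  intro U hU
  rw [Finset.mem_powerset, Finset.subset_empty] at hU
  subst hU
  simp

lemma rkW_le (F U : Finset (Fin n)) (hU : U ⊆ F) :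
    rkW prop c supp F ≤ capRank prop c (Ends supp U) + (F \ U).card := by
  refine Finset.sup_le fun V hV => ?_
  rw [Finset.mem_filter, Finset.mem_powerset] at hV
  obtain ⟨hVF, hVi⟩ := hV
  have h1 : (V ∩ U).card ≤ capRank prop c (Ends supp (V ∩ U)) :=
    hVi _ (Finset.mem_powerset.mpr Finset.inter_subset_left)
  have h2 : capRank prop c (Ends supp (V ∩ U)) ≤ capRank prop c (Ends supp U) :=
    capRank_mono prop c (Ends_mono supp Finset.inter_subset_right)
  have h3 : (V \ U).card ≤ (F \ U).card :=
    Finset.card_le_card (Finset.sdiff_subset_sdiff hVF (Finset.Subset.refl _))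
  have h4 : (V ∩ U).card + (V \ U).card = V.card :=
    Finset.card_inter_add_card_sdiff V U
  omega

lemma insert_tight {X Bv : Finset (Fin n)} {v : Fin n} (hBX : Bv ⊆ X)
    (hBi : Bv.card ≤ capRank prop c (Ends supp Bv))
    (hvB : capRank prop c (Ends supp (insert v Bv)) ≤ Bv.card) :
    capRank prop c (Ends supp (insert v X)) ≤ capRank prop c (Ends supp X) := by
  have hsub := fW_submod prop c supp X (insert v Bv)
  have h1 : X ∪ insert v Bv = insert v X := by
    rw [Finset.union_insert, Finset.union_eq_left.mpr hBX]
  have h2 : Bv ⊆ X ∩ insert v Bv :=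
    Finset.subset_inter hBX (Finset.subset_insert _ _)
  have h3 := capRank_mono prop c (Ends_mono supp h2)
  rw [h1] at hsub
  omega

lemma tight_biUnion {V : Finset (Fin n)} (hVi : IndepW prop c supp V)
    {ι : Type*} [DecidableEq ι] (s : Finset ι) (g : ι → Finset (Fin n))
    (hg : ∀ i ∈ s, g i ⊆ V)
    (hgt : ∀ i ∈ s, capRank prop c (Ends supp (g i)) ≤ (g i).card) :
    capRank prop c (Ends supp (s.biUnion g)) ≤ (s.biUnion g).card := by
  classical
  induction s using Finset.induction_on with
  | empty => simp [Ends, capRank]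
  | @insert a s ha ih =>
    have hg' : ∀ i ∈ s, g i ⊆ V := fun i hi => hg i (Finset.mem_insert_of_mem hi)
    have hgt' : ∀ i ∈ s, capRank prop c (Ends supp (g i)) ≤ (g i).card :=
      fun i hi => hgt i (Finset.mem_insert_of_mem hi)
    have ihs := ih hg' hgt'
    have hAV : g a ⊆ V := hg a (Finset.mem_insert_self a s)
    have hBV : s.biUnion g ⊆ V := Finset.biUnion_subset.mpr hg'
    have hsub := fW_submod prop c supp (g a) (s.biUnion g)
    have hint : (g a ∩ s.biUnion g).card ≤
        capRank prop c (Ends supp (g a ∩ s.biUnion g)) :=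
      hVi _ (Finset.mem_powerset.mpr (Finset.inter_subset_left.trans hAV))
    have hcard := Finset.card_union_add_card_inter (g a) (s.biUnion g)
    have hga := hgt a (Finset.mem_insert_self a s)
    rw [Finset.biUnion_insert]
    omega

lemma exists_le_rkW (F : Finset (Fin n)) :
    ∃ U, U ⊆ F ∧
      capRank prop c (Ends supp U) + (F \ U).card ≤ rkW prop c supp F := by
  classical
  have hne : (F.powerset.filter fun T => IndepW prop c supp T).Nonempty :=
    ⟨∅, Finset.mem_filter.mpr ⟨Finset.empty_mem_powerset F, IndepW_empty prop c supp⟩⟩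
  obtain ⟨V, hVmem, hVsup⟩ := Finset.exists_mem_eq_sup _ hne Finset.card
  rw [Finset.mem_filter, Finset.mem_powerset] at hVmem
  obtain ⟨hVF, hVi⟩ := hVmem
  have hrk : rkW prop c supp F = V.card := hVsup
  have key : ∀ v ∈ F \ V, ∃ B, B ⊆ V ∧
      capRank prop c (Ends supp (insert v B)) ≤ B.card := by
    intro v hv
    rw [Finset.mem_sdiff] at hv
    have hnotind : ¬ IndepW prop c supp (insert v V) := by
      intro hind
      have hmem : insert v V ∈ F.powerset.filter fun T => IndepW prop c supp T :=
        Finset.mem_filter.mpr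
          ⟨Finset.mem_powerset.mpr (Finset.insert_subset hv.1 hVF), hind⟩
      have hle2 := Finset.le_sup (f := Finset.card) hmem
      rw [Finset.card_insert_of_notMem hv.2, ← hrk] at hle2
      omega
    unfold IndepW at hnotind
    push_neg at hnotind
    obtain ⟨A, hA, hAc⟩ := hnotind
    rw [Finset.mem_powerset] at hA
    have hvA : v ∈ A := by
      by_contra hvA
      have hAV : A ⊆ V := fun x hx =>
        (Finset.mem_insert.mp (hA hx)).resolve_left (fun he => hvA (he ▸ hx))
      exact absurd (hVi A (Finset.mem_powerset.mpr hAV)) (not_le.mpr hAc)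
    refine ⟨A.erase v, fun x hx => ?_, ?_⟩
    · obtain ⟨hxv, hxA⟩ := Finset.mem_erase.mp hx
      exact (Finset.mem_insert.mp (hA hxA)).resolve_left hxv
    · rw [Finset.insert_erase hvA, Finset.card_erase_of_mem hvA]
      omega
  choose B hBV hBt using key
  set T := (F \ V).attach.biUnion (fun x => B x.1 x.2) with hT
  have hTV : T ⊆ V := Finset.biUnion_subset.mpr fun x _ => hBV x.1 x.2
  have hTt : capRank prop c (Ends supp T) ≤ T.card := by
    refine tight_biUnion prop c supp hVi _ _ (fun x _ => hBV x.1 x.2) (fun x _ => ?_)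
    exact le_trans
      (capRank_mono prop c (Ends_mono supp (Finset.subset_insert x.1 (B x.1 x.2))))
      (hBt x.1 x.2)
  have hstep : ∀ S : Finset (Fin n), S ⊆ F \ V →
      capRank prop c (Ends supp (T ∪ S)) ≤ capRank prop c (Ends supp T) := by
    intro S
    induction S using Finset.induction_on with
    | empty => intro _; rw [Finset.union_empty]
    | @insert a S ha ih =>
      intro hins
      have haFV : a ∈ F \ V := hins (Finset.mem_insert_self _ _)
      have hSsub : S ⊆ F \ V := fun x hx => hins (Finset.mem_insert_of_mem hx)
      have hBa : B a haFV ⊆ T := by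
        intro x hx
        exact Finset.mem_biUnion.mpr ⟨⟨a, haFV⟩, Finset.mem_attach _ _, hx⟩
      have h1 : T ∪ insert a S = insert a (T ∪ S) := Finset.union_insert a T S
      rw [h1]
      have hBi : (B a haFV).card ≤ capRank prop c (Ends supp (B a haFV)) :=
        hVi _ (Finset.mem_powerset.mpr (hBV a haFV))
      exact le_trans
        (insert_tight prop c supp (hBa.trans Finset.subset_union_left) hBi
          (hBt a haFV))
        (ih hSsub)
  refine ⟨T ∪ (F \ V), Finset.union_subset (hTV.trans hVF) (Finset.sdiff_subset), ?_⟩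
  have h1 := hstep (F \ V) (Finset.Subset.refl _)
  have h2 : F \ (T ∪ (F \ V)) = V \ T := by
    ext x
    simp only [Finset.mem_sdiff, Finset.mem_union, not_or, not_and, not_not]
    constructor
    · rintro ⟨hxF, hxT, hxFV⟩
      exact ⟨hxFV hxF, hxT⟩
    · rintro ⟨hxV, hxT⟩
      exact ⟨hVF hxV, hxT, fun _ => hxV⟩
  rw [h2, Finset.card_sdiff_of_subset hTV, hrk]
  have h3 : T.card ≤ V.card := Finset.card_le_card hTV
  omega

end Aux

/-- in a capacity-ranked generalized Wilson loop diagram, for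
every cyclic flat `F` of `M(W)`, the sum over all propagators of the restricted
capacities `c_F(p) = min(c(p), |End(F) ∩ E(p)|)` equals the rank of `F`. -/
theorem cyclicFlat_capacity_eq_rank
    (prop : E → P) (c : P → ℕ) (supp : E → Finset (Fin n))
    (hpos : ∀ p : P, 0 < c p)
    (hle : ∀ p : P, c p ≤ (Finset.univ.filter fun e => prop e = p).card)
    (hsupp : ∀ e : E, (∃ i : Fin n, supp e = {i}) ∨
      ∃ i : Fin n, supp e = ({i, i + 1} : Finset (Fin n)))
    (hcapranked : rkW prop c supp Finset.univ = ∑ p : P, c p)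
    (F : Finset (Fin n)) (hF : CyclicFlatW prop c supp F) :
    ∑ p : P, min (c p) (((Ends supp F).filter fun e => prop e = p).card) =
      rkW prop c supp F := by
  classical
  obtain ⟨U₀, hU₀F, hU₀⟩ := exists_le_rkW prop c supp F
  have hFU₀ : F ⊆ U₀ := by
    intro v hv
    by_contra hvU
    obtain ⟨C, hCF, hC, hvC⟩ := hF.2 v hv
    have hCdep := hC.1
    unfold IndepW at hCdep
    push_neg at hCdep
    obtain ⟨A, hA, hAc⟩ := hCdep
    rw [Finset.mem_powerset] at hA
    have hAC : A = C := by
      refine Finset.Subset.antisymm hA fun w hw => ?_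
      by_contra hwA
      have hsub : A ⊆ C.erase w := fun x hx =>
        Finset.mem_erase.mpr ⟨fun he => hwA (he ▸ hx), hA hx⟩
      exact absurd (hC.2 w hw A (Finset.mem_powerset.mpr hsub)) (not_le.mpr hAc)
    subst hAC
    have hCU : A ∩ U₀ ⊆ A.erase v := fun x hx =>
      Finset.mem_erase.mpr
        ⟨fun he => hvU (he ▸ (Finset.mem_inter.mp hx).2), (Finset.mem_inter.mp hx).1⟩
    have hCUi : (A ∩ U₀).card ≤ capRank prop c (Ends supp (A ∩ U₀)) :=
      hC.2 v hvC _ (Finset.mem_powerset.mpr hCU)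
    have hsub := fW_submod prop c supp U₀ A
    rw [Finset.inter_comm U₀ A] at hsub
    have hL5 := rkW_le prop c supp F (U₀ ∪ A) (Finset.union_subset hU₀F hCF)
    have hc1 : (A ∩ U₀).card + (A \ U₀).card = A.card :=
      Finset.card_inter_add_card_sdiff A U₀
    have hc2 : (F \ U₀) ∩ A = A \ U₀ := by
      ext x
      simp only [Finset.mem_sdiff, Finset.mem_inter]
      constructor
      · rintro ⟨⟨hxF, hxU⟩, hxA⟩; exact ⟨hxA, hxU⟩
      · rintro ⟨hxA, hxU⟩; exact ⟨⟨hCF hxA, hxU⟩, hxA⟩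
    have hc3 : ((F \ U₀) \ A).card + ((F \ U₀) ∩ A).card = (F \ U₀).card :=
      Finset.card_sdiff_add_card_inter _ _
    have hc4 : F \ (U₀ ∪ A) = (F \ U₀) \ A := by
      ext x
      simp only [Finset.mem_sdiff, Finset.mem_union, not_or]
      simp only [and_assoc]
    rw [hc4] at hL5
    rw [hc2] at hc3
    omega
  have hUF : U₀ = F := Finset.Subset.antisymm hU₀F hFU₀
  subst hUF
  rw [Finset.sdiff_self, Finset.card_empty] at hU₀
  have hge := rkW_le prop c supp U₀ U₀ (Finset.Subset.refl _)
  rw [Finset.sdiff_self, Finset.card_empty] at hge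
  have heq : rkW prop c supp U₀ = capRank prop c (Ends supp U₀) := by omega
  rw [heq]
  exact Finset.sum_congr rfl fun p _ => min_comm _ _
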